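/- Let B be a building set on a finite ground set V, let P ∈ B be an elementary block, and let B₀ ≠ B₀' be two inclusion-maximal blocks of B strictly contained in P. Then the connected components of P \ (B₀ ∪ B₀') are exactly the maximal blocks of B strictly contained in P other than B₀ and B₀', and B₀ ∩ B₀' = ∅. Consequently Σ_{M maximal in P} χ(M) = χ(P), i.e., the maximal strict subblocks of an elementary block partition it. -/

import Mathlib

open scoped Classical

variable {V : Type*} [Fintype V] [DecidableEq V]

/-- A building set on the finite ground set `V`. -/
def IsBuildingSet (B : Finset (Finset V)) : Prop :=
  (∀ b ∈ B, b.Nonempty) ∧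
  (∀ b₁ ∈ B, ∀ b₂ ∈ B, (b₁ ∩ b₂).Nonempty → b₁ ∪ b₂ ∈ B) ∧
  (∀ v : V, {v} ∈ B)

/-- `M` is an inclusion-maximal block of `B` strictly contained in `P`. -/
def MaxIn (B : Finset (Finset V)) (P M : Finset V) : Prop :=
  M ∈ B ∧ M ⊂ P ∧ ∀ C ∈ B, M ⊂ C → ¬ C ⊂ P

/-- The block `P` is elementary. -/
def Elementary (B : Finset (Finset V)) (P : Finset V) : Prop :=
  ∀ B' ∈ B, ∀ B'' ∈ B, B' ≠ P → B'' ≠ P → P = B' ∪ B'' → B' ∩ B'' = ∅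

/-- The connected components of `U`: inclusion-maximal blocks of `B` contained in `U`. -/
noncomputable def ccSet (B : Finset (Finset V)) (U : Finset V) : Finset (Finset V) :=
  B.filter (fun K => K ⊆ U ∧ ∀ C ∈ B, C ⊆ U → K ⊆ C → K = C)

/-- A `B`-nested set: contained in `B`, containing all maximal elements of `B`,
and such that for every subset `X` whose union lies in `B`, the union lies in `X`. -/
def IsNested (B N : Finset (Finset V)) : Prop :=
  N ⊆ B ∧
  (∀ K ∈ B, (∀ C ∈ B, K ⊆ C → K = C) → K ∈ N) ∧
  (∀ X ⊆ N, X.sup id ∈ B → X.sup id ∈ X)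

/-- A maximal `B`-nested set (inclusion-maximal among `B`-nested sets). -/
def IsMaxNested (B N : Finset (Finset V)) : Prop :=
  IsNested B N ∧ ∀ N', IsNested B N' → N ⊆ N' → N = N'

/-- Two blocks are exchangeable if two maximal nested sets differ exactly by them. -/
def ExchangeableB (B : Finset (Finset V)) (b b' : Finset V) : Prop :=
  b ≠ b' ∧ ∃ N N', IsMaxNested B N ∧ IsMaxNested B N' ∧ b ∈ N ∧ b' ∈ N' ∧
    N.erase b = N'.erase b'

/-- `P` is the parent of `b` in `N`: the unique minimal element of `{C ∈ N | b ⊊ C}`. -/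
def IsParent (N : Finset (Finset V)) (b P : Finset V) : Prop :=
  P ∈ N ∧ b ⊂ P ∧ ∀ C ∈ N, b ⊂ C → P ⊆ C

/-- `(b, b', P)` is an exchange frame. -/
def IsExchangeFrame (B : Finset (Finset V)) (b b' P : Finset V) : Prop :=
  ∃ N N', IsMaxNested B N ∧ IsMaxNested B N' ∧ b ∈ N ∧ b' ∈ N' ∧ b ≠ b' ∧
    N.erase b = N'.erase b' ∧ IsParent N b P

/-- Characteristic vector of a subset of `V` in `ℝ^V`. -/
def chi (S : Finset V) : V → ℝ := fun v => if v ∈ S then 1 else 0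

/-- The root of `C` in the nested set `N`. -/
noncomputable def root (N : Finset (Finset V)) (C : Finset V) : Finset V :=
  C \ (N.filter (fun D => D ⊂ C)).sup id


private lemma existsMax (B : Finset (Finset V)) {P C : Finset V}
    (hC : C ∈ B) (hCP : C ⊂ P) : ∃ M, MaxIn B P M ∧ C ⊆ M := by
  obtain ⟨M, hMs, hMmax⟩ := Finset.exists_maximal
    (s := B.filter fun D => C ⊆ D ∧ D ⊂ P) ⟨C, by simp [hC, hCP]⟩
  simp only [Finset.mem_filter] at hMs
  refine ⟨M, ⟨hMs.1, hMs.2.2, ?_⟩, hMs.2.1⟩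
  intro D hD hMD hDP
  exact hMD.2 (hMmax (Finset.mem_filter.2 ⟨hD, hMs.2.1.trans hMD.subset, hDP⟩) hMD.subset)

private lemma maxDisjoint (B : Finset (Finset V)) (hB : IsBuildingSet B)
    {P : Finset V} (hP : P ∈ B) (hel : Elementary B P)
    {M M' : Finset V} (hM : MaxIn B P M) (hM' : MaxIn B P M') (hne : M ≠ M') :
    M ∩ M' = ∅ := by
  by_contra h
  have hint : (M ∩ M').Nonempty := Finset.nonempty_iff_ne_empty.2 h
  have hU : M ∪ M' ∈ B := hB.2.1 M hM.1 M' hM'.1 hint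
  by_cases hUP : M ∪ M' = P
  · exact h (hel M hM.1 M' hM'.1 hM.2.1.ne hM'.2.1.ne hUP.symm)
  · have hMU : M ⊂ M ∪ M' := by
      refine Finset.ssubset_iff_subset_ne.2 ⟨Finset.subset_union_left, ?_⟩
      intro hEq
      have hlt : M' ⊂ M := Finset.ssubset_iff_subset_ne.2
        ⟨by rw [hEq]; exact Finset.subset_union_right, fun h' => hne h'.symm⟩
      exact hM'.2.2 M hM.1 hlt hM.2.1
    have hUP' : M ∪ M' ⊂ P := Finset.ssubset_iff_subset_ne.2
      ⟨Finset.union_subset hM.2.1.subset hM'.2.1.subset, hUP⟩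
    exact hM.2.2 _ hU hMU hUP'

private lemma coverMax (B : Finset (Finset V)) (hB : IsBuildingSet B)
    {P b : Finset V} (hb : MaxIn B P b)
    {v : V} (hv : v ∈ P) : ∃ M, MaxIn B P M ∧ v ∈ M := by
  have hsv : ({v} : Finset V) ∈ B := hB.2.2 v
  have hsub : ({v} : Finset V) ⊂ P := by
    refine Finset.ssubset_iff_subset_ne.2 ⟨Finset.singleton_subset_iff.2 hv, ?_⟩
    intro hEq
    obtain ⟨x, hx, hxn⟩ := Finset.exists_of_ssubset hb.2.1
    obtain ⟨y, hy⟩ := hB.1 b hb.1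
    have hx' : x = v := by rw [← hEq] at hx; simpa using hx
    have hy' : y = v := by
      have hyP := hb.2.1.subset hy
      rw [← hEq] at hyP; simpa using hyP
    exact hxn (by rw [hx', ← hy']; exact hy)
  obtain ⟨M, hM, hvM⟩ := existsMax B hsv hsub
  exact ⟨M, hM, Finset.singleton_subset_iff.1 hvM⟩

private lemma disjMem {M M' : Finset V} (h : M ∩ M' = ∅) {x : V}
    (hx : x ∈ M) : x ∉ M' := by
  intro hx'
  have : x ∈ M ∩ M' := Finset.mem_inter.2 ⟨hx, hx'⟩
  simp [h] at this

theorem stmt10 (B : Finset (Finset V)) (hB : IsBuildingSet B)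
    (P : Finset V) (hP : P ∈ B) (hel : Elementary B P)
    (b b' : Finset V) (hb : MaxIn B P b) (hb' : MaxIn B P b') (hne : b ≠ b') :
    ccSet B (P \ (b ∪ b')) = (B.filter (fun M => MaxIn B P M)) \ {b, b'} ∧
    b ∩ b' = ∅ ∧
    ∑ M ∈ B.filter (fun M => MaxIn B P M), chi M = chi P := by
  obtain ⟨zb, hzb⟩ := hB.1 b hb.1
  obtain ⟨zb', hzb'⟩ := hB.1 b' hb'.1
  have hdisj : b ∩ b' = ∅ := maxDisjoint B hB hP hel hb hb' hne
  refine ⟨?_, hdisj, ?_⟩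
  · ext K
    simp only [ccSet, Finset.mem_filter, Finset.mem_sdiff, Finset.mem_insert,
      Finset.mem_singleton]
    constructor
    · rintro ⟨hKB, hKU, hKmax⟩
      obtain ⟨y, hy⟩ := hB.1 K hKB
      have hyU := hKU hy
      simp only [Finset.mem_sdiff, Finset.mem_union, not_or] at hyU
      have hKne : K ≠ b := fun h => hyU.2.1 (h ▸ hy)
      have hKne' : K ≠ b' := fun h => hyU.2.2 (h ▸ hy)
      have hKP : K ⊂ P := by
        refine Finset.ssubset_iff_subset_ne.2 ⟨?_, ?_⟩
        · intro x hx
          exact (Finset.mem_sdiff.1 (hKU hx)).1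
        · intro hEq
          have : zb ∈ K := hEq ▸ hb.2.1.subset hzb
          have := Finset.mem_sdiff.1 (hKU this)
          simp only [Finset.mem_union, not_or] at this
          exact this.2.1 hzb
      refine ⟨⟨hKB, hKB, hKP, ?_⟩, ?_⟩
      · intro C hC hKC hCP
        obtain ⟨M, hM, hCM⟩ := existsMax B hC hCP
        have hyM : y ∈ M := hCM (hKC.subset hy)
        have hMb : M ≠ b := fun h => hyU.2.1 (h ▸ hyM)
        have hMb' : M ≠ b' := fun h => hyU.2.2 (h ▸ hyM)
        have hMU : M ⊆ P \ (b ∪ b') := by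
          intro x hx
          simp only [Finset.mem_sdiff, Finset.mem_union, not_or]
          exact ⟨hM.2.1.subset hx,
            disjMem (maxDisjoint B hB hP hel hM hb hMb) hx,
            disjMem (maxDisjoint B hB hP hel hM hb' hMb') hx⟩
        have hKM : K = M := hKmax M hM.1 hMU (hKC.subset.trans hCM)
        exact (hKC.trans_subset hCM).ne hKM
      · rintro (h | h) <;> [exact hKne h; exact hKne' h]
    · rintro ⟨⟨hKB, hKmax⟩, hKbb'⟩
      push_neg at hKbb'
      have hKU : K ⊆ P \ (b ∪ b') := by
        intro x hx
        simp only [Finset.mem_sdiff, Finset.mem_union, not_or]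
        exact ⟨hKmax.2.1.subset hx,
          disjMem (maxDisjoint B hB hP hel hKmax hb hKbb'.1) hx,
          disjMem (maxDisjoint B hB hP hel hKmax hb' hKbb'.2) hx⟩
      refine ⟨hKB, hKU, ?_⟩
      intro C hC hCU hKC
      by_contra hKCne
      have hCP : C ⊂ P := by
        refine Finset.ssubset_iff_subset_ne.2 ⟨?_, ?_⟩
        · intro x hx; exact (Finset.mem_sdiff.1 (hCU hx)).1
        · intro hEq
          have : zb ∈ C := hEq ▸ hb.2.1.subset hzb
          have := Finset.mem_sdiff.1 (hCU this)
          simp only [Finset.mem_union, not_or] at this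
          exact this.2.1 hzb
      exact hKmax.2.2 C hC (Finset.ssubset_iff_subset_ne.2 ⟨hKC, hKCne⟩) hCP
  · funext v
    rw [Finset.sum_apply]
    by_cases hv : v ∈ P
    · obtain ⟨Mv, hMv, hvMv⟩ := coverMax B hB hb hv
      have hMvs : Mv ∈ B.filter (fun M => MaxIn B P M) :=
        Finset.mem_filter.2 ⟨hMv.1, hMv⟩
      rw [Finset.sum_eq_single_of_mem Mv hMvs]
      · simp [chi, hvMv, hv]
      · intro M hM hMne
        have hMmax := (Finset.mem_filter.1 hM).2
        have hvM : v ∉ M :=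
          fun hvM => disjMem (maxDisjoint B hB hP hel hMmax hMv hMne) hvM hvMv
        simp [chi, hvM]
    · rw [Finset.sum_eq_zero, chi, if_neg hv]
      intro M hM
      have hMmax := (Finset.mem_filter.1 hM).2
      have : v ∉ M := fun h => hv (hMmax.2.1.subset h)
      simp [chi, this]
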